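/- arXiv:2604.08724 — 2 statements merged into one kernel-verified Lean document; each statement's English description precedes it below -/
import Mathlib

section
/- For an integer n₀ ≥ 0 let S_{n₀} = {m² : m ∈ ℤ, m ≥ n₀} in the additive group ℤ. Then ℤ ∖ (S_{n₀} − S_{n₀}) equals 4ℤ + 2 if n₀ = 0, and equals (4ℤ + 2) ∪ {±1, ±3, …, ±(2n₀−1)} ∪ {±4, ±8, …, ±4n₀} if n₀ > 0. Moreover, S_0 = {0, 1, 4, 9, …} is index stable in ℤ with index 2, while S_1 = {1, 4, 9, …} is not index stable and satisfies |ℤ:S_1|⁻ = 3 and |ℤ:S_1|⁺ = 4. -/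
open Pointwise

/-- The sum `A + B` is direct. -/
def IsDirectSum (A B : Set ℤ) : Prop :=
  ∀ a₁ ∈ A, ∀ b₁ ∈ B, ∀ a₂ ∈ A, ∀ b₂ ∈ B, a₁ + b₁ = a₂ + b₂ → a₁ = a₂ ∧ b₁ = b₂

/-- `B` is a subfactor of `(ℤ,+)` relative to `A`. -/
def IsSubfactor (A B : Set ℤ) : Prop :=
  IsDirectSum A B ∧ ∀ B' : Set ℤ, B ⊆ B' → IsDirectSum A B' → B' = B

/-- The upper subindex `|ℤ:A|⁺`. -/
noncomputable def upperIndex (A : Set ℤ) : Cardinal :=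
  sSup {c | ∃ B : Set ℤ, IsSubfactor A B ∧ c = Cardinal.mk ↥B}

/-- The lower subindex `|ℤ:A|⁻`. -/
noncomputable def lowerIndex (A : Set ℤ) : Cardinal :=
  sInf {c | ∃ B : Set ℤ, IsSubfactor A B ∧ c = Cardinal.mk ↥B}

/-- `S n₀ = {m² : m ∈ ℤ, m ≥ n₀}`. -/
def Squares (n₀ : ℕ) : Set ℤ := {x : ℤ | ∃ m : ℤ, (n₀ : ℤ) ≤ m ∧ x = m ^ 2}

/-! ### Auxiliary development -/

/-- Differences allowed within a direct complement of `Squares 1`. -/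
def Allowed (d : ℤ) : Prop := d % 4 = 2 ∨ d = 0 ∨ d = 1 ∨ d = -1 ∨ d = 4 ∨ d = -4

lemma sq_mem (n₀ : ℕ) {m : ℤ} (h : (n₀:ℤ) ≤ m) : m ^ 2 ∈ Squares n₀ := ⟨m, h, rfl⟩

lemma mem_sub_squares (n₀ : ℕ) (x : ℤ) :
    x ∈ Squares n₀ - Squares n₀ ↔
    x = 0 ∨ (x % 2 = 1 ∧ (2*(n₀:ℤ)+1 ≤ x ∨ x ≤ -(2*(n₀:ℤ)+1))) ∨
      (x % 4 = 0 ∧ x ≠ 0 ∧ (4*(n₀:ℤ)+4 ≤ x ∨ x ≤ -(4*(n₀:ℤ)+4))) := by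
  constructor
  · rintro ⟨a, ⟨m, hm, rfl⟩, b, ⟨k, hk, rfl⟩, hx0⟩
    have hx : x = (m-k)*(m+k) := by rw [← hx0]; ring
    by_cases hmk : m = k
    · left; rw [hx, hmk]; ring
    · have hsum : 2*(n₀:ℤ)+1 ≤ m + k := by omega
      rcases Int.even_or_odd (m - k) with ⟨u, hu⟩ | ⟨u, hu⟩
      · obtain ⟨v, hv⟩ : ∃ v, m + k = 2*v := ⟨m - u, by omega⟩
        have hx4 : x = 4*(u*v) := by rw [hx, hu, hv]; ring
        have hv1 : (n₀:ℤ)+1 ≤ v := by omega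
        have hu0 : u ≠ 0 := by omega
        have hsz : 4*(n₀:ℤ)+4 ≤ x ∨ x ≤ -(4*(n₀:ℤ)+4) := by
          rcases lt_or_gt_of_ne hu0 with h' | h'
          · right
            have : u*v ≤ -1*v := mul_le_mul_of_nonneg_right (by omega) (by omega)
            omega
          · left
            have : 1*v ≤ u*v := mul_le_mul_of_nonneg_right (by omega) (by omega)
            omega
        exact Or.inr (Or.inr ⟨by omega, by omega, hsz⟩)
      · have hv : m + k = 2*(u+k) + 1 := by omega
        right; left
        constructor
        · obtain ⟨w, hw⟩ : ∃ w, x = 2*w + 1 :=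
            ⟨2*u*(u+k)+u+(u+k), by rw [hx, hu, hv]; ring⟩
          omega
        · rcases lt_or_gt_of_ne (show m - k ≠ 0 by omega) with h' | h'
          · right
            have : (m-k)*(m+k) ≤ -1*(m+k) := mul_le_mul_of_nonneg_right (by omega) (by omega)
            omega
          · left
            have : 1*(m+k) ≤ (m-k)*(m+k) := mul_le_mul_of_nonneg_right (by omega) (by omega)
            omega
  · rintro (rfl | ⟨hodd, hx | hx⟩ | ⟨h4, hne, hx | hx⟩)
    · exact ⟨(n₀:ℤ)^2, sq_mem n₀ le_rfl, (n₀:ℤ)^2, sq_mem n₀ le_rfl, by ring⟩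
    · obtain ⟨t, ht⟩ : ∃ t, x = 2*t+1 := ⟨x/2, by omega⟩
      exact ⟨(t+1)^2, sq_mem n₀ (by omega), t^2, sq_mem n₀ (by omega), by rw [ht]; ring⟩
    · obtain ⟨t, ht⟩ : ∃ t, x = -(2*t+1) := ⟨(-x)/2, by omega⟩
      exact ⟨t^2, sq_mem n₀ (by omega), (t+1)^2, sq_mem n₀ (by omega), by rw [ht]; ring⟩
    · obtain ⟨j, hj⟩ : ∃ j, x = 4*j := ⟨x/4, by omega⟩
      exact ⟨(j+1)^2, sq_mem n₀ (by omega), (j-1)^2, sq_mem n₀ (by omega), by rw [hj]; ring⟩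
    · obtain ⟨j, hj⟩ : ∃ j, x = -(4*j) := ⟨(-x)/4, by omega⟩
      exact ⟨(j-1)^2, sq_mem n₀ (by omega), (j+1)^2, sq_mem n₀ (by omega), by rw [hj]; ring⟩

lemma allowed_sorted (a b c d e : ℤ)
    (h1 : Allowed (b-a)) (h2 : Allowed (c-a)) (h3 : Allowed (d-a)) (h4 : Allowed (e-a))
    (h5 : Allowed (c-b)) (h6 : Allowed (d-b)) (h7 : Allowed (e-b)) (h8 : Allowed (d-c))
    (h9 : Allowed (e-c)) (h10 : Allowed (e-d))
    (o1 : a < b) (o2 : b < c) (o3 : c < d) (o4 : d < e) : False := by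
  unfold Allowed at *
  omega

lemma no_five_clique (v : Fin 5 → ℤ) (hinj : Function.Injective v)
    (h : ∀ i j, Allowed (v i - v j)) : False := by
  classical
  set s : Finset ℤ := Finset.image v Finset.univ with hs
  have hcard : s.card = 5 := by
    rw [hs, Finset.card_image_of_injective _ hinj, Finset.card_univ, Fintype.card_fin]
  have hmem : ∀ x ∈ s, ∃ i, v i = x := by
    intro x hx
    simp [hs] at hx
    exact hx
  have hall : ∀ x ∈ s, ∀ y ∈ s, Allowed (x - y) := by
    intro x hx y hy
    obtain ⟨i, rfl⟩ := hmem x hx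
    obtain ⟨j, rfl⟩ := hmem y hy
    exact h i j
  have hsorted : List.Pairwise (· < ·) (s.sort (· ≤ ·)) := List.sortedLT_iff_pairwise.mp (Finset.sortedLT_sort s)
  have hlen : (s.sort (· ≤ ·)).length = 5 := by rw [Finset.length_sort, hcard]
  have hmem' : ∀ x ∈ s.sort (· ≤ ·), x ∈ s := fun x hx => (Finset.mem_sort _).mp hx
  set l := s.sort (· ≤ ·) with hl
  clear_value l
  match l, hsorted, hlen, hmem' with
  | [a,b,c,d,e], hsorted, hlen, hmem' =>
    simp [List.pairwise_cons] at hsorted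
    have ha := hmem' a (by simp)
    have hb := hmem' b (by simp)
    have hc := hmem' c (by simp)
    have hd := hmem' d (by simp)
    have he := hmem' e (by simp)
    exact allowed_sorted a b c d e (hall b hb a ha) (hall c hc a ha) (hall d hd a ha)
      (hall e he a ha) (hall c hc b hb) (hall d hd b hb) (hall e he b hb)
      (hall d hd c hc) (hall e he c hc) (hall e he d hd)
      hsorted.1.1 hsorted.2.1.1 hsorted.2.2.1.1 hsorted.2.2.2

lemma direct_iff_clique (B : Set ℤ) :
    IsDirectSum (Squares 1) B ↔ ∀ b₁ ∈ B, ∀ b₂ ∈ B, Allowed (b₁ - b₂) := by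
  constructor
  · intro hd b₁ hb₁ b₂ hb₂
    by_contra hna
    unfold Allowed at hna
    push_neg at hna
    obtain ⟨p, hp, q, hq, hpq⟩ :=
      (mem_sub_squares 1 (b₁ - b₂)).mpr (by omega)
    have hpq' : p - q = b₁ - b₂ := hpq
    obtain ⟨-, h2⟩ := hd p hp b₂ hb₂ q hq b₁ hb₁ (by omega)
    omega
  · intro h a₁ ha₁ b₁ hb₁ a₂ ha₂ b₂ hb₂ heq
    have hA := (mem_sub_squares 1 (a₁ - a₂)).mp ⟨a₁, ha₁, a₂, ha₂, rfl⟩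
    have hB := h b₂ hb₂ b₁ hb₁
    unfold Allowed at hB
    constructor <;> omega

lemma direct_iff_clique₀ (B : Set ℤ) :
    IsDirectSum (Squares 0) B ↔ ∀ b₁ ∈ B, ∀ b₂ ∈ B, ((b₁ - b₂) % 4 = 2 ∨ b₁ = b₂) := by
  constructor
  · intro hd b₁ hb₁ b₂ hb₂
    by_contra hna
    push_neg at hna
    obtain ⟨p, hp, q, hq, hpq⟩ :=
      (mem_sub_squares 0 (b₁ - b₂)).mpr (by omega)
    have hpq' : p - q = b₁ - b₂ := hpq
    obtain ⟨-, h2⟩ := hd p hp b₂ hb₂ q hq b₁ hb₁ (by omega)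
    omega
  · intro h a₁ ha₁ b₁ hb₁ a₂ ha₂ b₂ hb₂ heq
    have hA := (mem_sub_squares 0 (a₁ - a₂)).mp ⟨a₁, ha₁, a₂, ha₂, rfl⟩
    have hB := h b₂ hb₂ b₁ hb₁
    constructor <;> omega

lemma three_le_of_distinct {s : Set ℤ} {a b c : ℤ} (ha : a ∈ s) (hb : b ∈ s) (hc : c ∈ s)
    (hab : a ≠ b) (hac : a ≠ c) (hbc : b ≠ c) : (3:Cardinal) ≤ Cardinal.mk ↥s := by
  have hsub : ({a, b, c} : Set ℤ) ⊆ s := by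
    intro x hx; rcases hx with rfl | rfl | rfl <;> assumption
  refine le_trans ?_ (Cardinal.mk_le_mk_of_subset hsub)
  rw [Cardinal.mk_insert (by simp [hab, hac]), Cardinal.mk_insert (by simp [hbc]),
    Cardinal.mk_singleton]
  norm_num

/-- Every subfactor of `Squares 1` contains at least three elements. -/
lemma subfactor_one_three {B : Set ℤ} (h : IsSubfactor (Squares 1) B) :
    ∃ a ∈ B, ∃ b ∈ B, ∃ c ∈ B, a ≠ b ∧ a ≠ c ∧ b ≠ c := by
  obtain ⟨hd, hmax⟩ := h
  have clique := (direct_iff_clique B).mp hd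
  -- B is nonempty
  have hne : ∃ a, a ∈ B := by
    by_contra h'
    push_neg at h'
    have hdir : IsDirectSum (Squares 1) {0} := by
      rw [direct_iff_clique]
      intro b₁ hb₁ b₂ hb₂
      simp at hb₁ hb₂
      subst hb₁; subst hb₂
      unfold Allowed; omega
    have := hmax {0} (fun x hx => absurd hx (h' x)) hdir
    exact h' 0 (this ▸ rfl)
  obtain ⟨a, ha⟩ := hne
  -- B has a second element
  have hne2 : ∃ b ∈ B, b ≠ a := by
    by_contra h'
    push_neg at h'
    have hdir : IsDirectSum (Squares 1) (insert (a+2) B) := by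
      rw [direct_iff_clique]
      intro b₁ hb₁ b₂ hb₂
      rcases Set.mem_insert_iff.mp hb₁ with rfl | hb₁ <;>
        rcases Set.mem_insert_iff.mp hb₂ with h2 | hb₂
      · rw [h2]; unfold Allowed; omega
      · rw [h' b₂ hb₂]; unfold Allowed; omega
      · rw [h' b₁ hb₁, h2]; unfold Allowed; omega
      · rw [h' b₁ hb₁, h' b₂ hb₂]; unfold Allowed; omega
    have := hmax _ (Set.subset_insert _ _) hdir
    have : a + 2 ∈ B := this ▸ Set.mem_insert _ _
    have := h' _ this
    omega
  obtain ⟨b, hb, hba⟩ := hne2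
  -- B has a third element
  have hne3 : ∃ c ∈ B, c ≠ a ∧ c ≠ b := by
    by_contra h'
    push_neg at h'
    have h'' : ∀ x ∈ B, x = a ∨ x = b := by
      intro x hx
      by_contra hx'
      push_neg at hx'
      exact hx'.2 (h' x hx hx'.1)
    obtain ⟨x₀, hxa, hxb, hna, hnb⟩ :
        ∃ x₀, Allowed (x₀ - a) ∧ Allowed (x₀ - b) ∧ x₀ ≠ a ∧ x₀ ≠ b := by
      rcases clique b hb a ha with h6 | h6 | h6 | h6 | h6 | h6
      · exact ⟨b+4, by unfold Allowed; omega, by unfold Allowed; omega, by omega, by omega⟩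
      · exact ⟨a+2, by unfold Allowed; omega, by unfold Allowed; omega, by omega, by omega⟩
      · exact ⟨a+2, by unfold Allowed; omega, by unfold Allowed; omega, by omega, by omega⟩
      · exact ⟨a-2, by unfold Allowed; omega, by unfold Allowed; omega, by omega, by omega⟩
      · exact ⟨a+2, by unfold Allowed; omega, by unfold Allowed; omega, by omega, by omega⟩
      · exact ⟨a+2, by unfold Allowed; omega, by unfold Allowed; omega, by omega, by omega⟩
    have hdir : IsDirectSum (Squares 1) (insert x₀ B) := by
      rw [direct_iff_clique]
      have hab := clique a ha b hb
      have hba' := clique b hb a ha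
      intro b₁ hb₁ b₂ hb₂
      have e₁ : b₁ = x₀ ∨ b₁ = a ∨ b₁ = b := by
        rcases Set.mem_insert_iff.mp hb₁ with h1 | h1
        · exact Or.inl h1
        · exact Or.inr (h'' _ h1)
      have e₂ : b₂ = x₀ ∨ b₂ = a ∨ b₂ = b := by
        rcases Set.mem_insert_iff.mp hb₂ with h1 | h1
        · exact Or.inl h1
        · exact Or.inr (h'' _ h1)
      unfold Allowed at *
      rcases e₁ with rfl | rfl | rfl <;> rcases e₂ with h2 | h2 | h2 <;> omega
    have := hmax _ (Set.subset_insert _ _) hdir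
    have hx₀ : x₀ ∈ B := this ▸ Set.mem_insert _ _
    rcases h'' _ hx₀ with h1 | h1
    · exact hna h1
    · exact hnb h1
  obtain ⟨c, hc, hca, hcb⟩ := hne3
  exact ⟨a, ha, b, hb, c, hc, fun e => hba e.symm, fun e => hca e.symm, fun e => hcb e.symm⟩

/-- `{0,1,2}` is a subfactor of `Squares 1`. -/
lemma subfactor_012 : IsSubfactor (Squares 1) {0, 1, 2} := by
  constructor
  · rw [direct_iff_clique]
    intro b₁ hb₁ b₂ hb₂
    simp only [Set.mem_insert_iff, Set.mem_singleton_iff] at hb₁ hb₂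
    unfold Allowed
    rcases hb₁ with rfl | rfl | rfl <;> rcases hb₂ with rfl | rfl | rfl <;> omega
  · intro B' hsub hdir
    have clique' := (direct_iff_clique B').mp hdir
    apply Set.eq_of_subset_of_subset _ hsub
    intro x hx
    have h0 := clique' x hx 0 (hsub (by simp))
    have h1 := clique' x hx 1 (hsub (by simp))
    have h2 := clique' x hx 2 (hsub (by simp))
    simp only [Set.mem_insert_iff, Set.mem_singleton_iff]
    unfold Allowed at h0 h1 h2
    omega

/-- `{0,2,4,6}` is a subfactor of `Squares 1`. -/
lemma subfactor_0246 : IsSubfactor (Squares 1) {0, 2, 4, 6} := by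
  constructor
  · rw [direct_iff_clique]
    intro b₁ hb₁ b₂ hb₂
    simp only [Set.mem_insert_iff, Set.mem_singleton_iff] at hb₁ hb₂
    unfold Allowed
    rcases hb₁ with rfl | rfl | rfl | rfl <;> rcases hb₂ with rfl | rfl | rfl | rfl <;> omega
  · intro B' hsub hdir
    have clique' := (direct_iff_clique B').mp hdir
    apply Set.eq_of_subset_of_subset _ hsub
    intro x hx
    have h0 := clique' x hx 0 (hsub (by simp))
    have h1 := clique' x hx 2 (hsub (by simp))
    have h2 := clique' x hx 4 (hsub (by simp))
    have h3 := clique' x hx 6 (hsub (by simp))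
    simp only [Set.mem_insert_iff, Set.mem_singleton_iff]
    unfold Allowed at h0 h1 h2 h3
    omega

lemma mk_012 : Cardinal.mk ↥({0, 1, 2} : Set ℤ) = 3 := by
  rw [Cardinal.mk_insert (by norm_num), Cardinal.mk_insert (by norm_num),
    Cardinal.mk_singleton]
  norm_num

lemma mk_0246 : Cardinal.mk ↥({0, 2, 4, 6} : Set ℤ) = 4 := by
  rw [Cardinal.mk_insert (by norm_num), Cardinal.mk_insert (by norm_num),
    Cardinal.mk_insert (by norm_num), Cardinal.mk_singleton]
  norm_num

lemma direct_card_le {B : Set ℤ} (hd : IsDirectSum (Squares 1) B) :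
    Cardinal.mk ↥B ≤ 4 := by
  have clique := (direct_iff_clique B).mp hd
  by_contra h4
  have h5 : (5:Cardinal) ≤ Cardinal.mk ↥B := by
    have h4' : (4:Cardinal) < Cardinal.mk ↥B := not_le.mp h4
    have hsucc : Order.succ (4:Cardinal) ≤ Cardinal.mk ↥B := Order.succ_le_of_lt h4'
    have h5' : Order.succ (4:Cardinal) = 5 := by
      rw [show ((4:Cardinal)) = ((4:ℕ):Cardinal) by norm_num, ← Cardinal.nat_succ]
      norm_num
    rwa [h5'] at hsucc
  rw [show (5:Cardinal) = Cardinal.mk (Fin 5) by simp] at h5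
  obtain ⟨f⟩ := (Cardinal.le_def _ _).mp h5
  refine no_five_clique (fun i => (f i : ℤ)) (fun i j hij => f.injective (Subtype.ext hij)) ?_
  intro i j
  exact clique _ (f i).2 _ (f j).2

theorem stmt18 (n₀ : ℕ) :
    (Squares 0 - Squares 0)ᶜ = {x : ℤ | ∃ k : ℤ, x = 4 * k + 2} ∧
    (0 < n₀ → (Squares n₀ - Squares n₀)ᶜ =
      {x : ℤ | ∃ k : ℤ, x = 4 * k + 2} ∪
      {x : ℤ | ∃ j : ℤ, 1 ≤ j ∧ j ≤ (n₀ : ℤ) ∧ (x = 2 * j - 1 ∨ x = -(2 * j - 1))} ∪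
      {x : ℤ | ∃ j : ℤ, 1 ≤ j ∧ j ≤ (n₀ : ℤ) ∧ (x = 4 * j ∨ x = -(4 * j))}) ∧
    (∀ B : Set ℤ, IsSubfactor (Squares 0) B → Cardinal.mk ↥B = 2) ∧
    lowerIndex (Squares 1) = 3 ∧
    upperIndex (Squares 1) = 4 := by
  refine ⟨?_, ?_, ?_, ?_, ?_⟩
  · -- part 1
    ext x
    simp only [Set.mem_compl_iff, Set.mem_setOf_eq, mem_sub_squares 0]
    constructor
    · intro h
      exact ⟨(x-2)/4, by omega⟩
    · rintro ⟨k, rfl⟩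
      omega
  · -- part 2
    intro hn₀
    ext x
    simp only [Set.mem_compl_iff, Set.mem_union, Set.mem_setOf_eq, mem_sub_squares n₀]
    constructor
    · intro h
      by_cases hx2 : x % 4 = 2
      · exact Or.inl (Or.inl ⟨(x-2)/4, by omega⟩)
      by_cases hodd : x % 2 = 1
      · rcases le_or_gt 0 x with h' | h'
        · exact Or.inl (Or.inr ⟨(x+1)/2, by omega, by omega, Or.inl (by omega)⟩)
        · exact Or.inl (Or.inr ⟨(1-x)/2, by omega, by omega, Or.inr (by omega)⟩)
      · rcases le_or_gt 0 x with h' | h'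
        · exact Or.inr ⟨x/4, by omega, by omega, Or.inl (by omega)⟩
        · exact Or.inr ⟨(-x)/4, by omega, by omega, Or.inr (by omega)⟩
    · rintro ((⟨k, rfl⟩ | ⟨j, h1, h2, rfl | rfl⟩) | ⟨j, h1, h2, rfl | rfl⟩) <;> omega
  · -- part 3
    intro B hB
    obtain ⟨hd, hmax⟩ := hB
    have clique := (direct_iff_clique₀ B).mp hd
    -- nonempty
    have hne : ∃ a, a ∈ B := by
      by_contra h'
      push_neg at h'
      have hdir : IsDirectSum (Squares 0) {0} := by
        rw [direct_iff_clique₀]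
        intro b₁ hb₁ b₂ hb₂
        simp at hb₁ hb₂
        omega
      have := hmax {0} (fun x hx => absurd hx (h' x)) hdir
      exact h' 0 (this ▸ rfl)
    obtain ⟨a, ha⟩ := hne
    have hne2 : ∃ b ∈ B, b ≠ a := by
      by_contra h'
      push_neg at h'
      have hdir : IsDirectSum (Squares 0) (insert (a+2) B) := by
        rw [direct_iff_clique₀]
        intro b₁ hb₁ b₂ hb₂
        rcases Set.mem_insert_iff.mp hb₁ with rfl | hb₁ <;>
          rcases Set.mem_insert_iff.mp hb₂ with h2 | hb₂
        · omega
        · have := h' b₂ hb₂; omega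
        · have := h' b₁ hb₁; omega
        · have := h' b₁ hb₁; have := h' b₂ hb₂; omega
      have := hmax _ (Set.subset_insert _ _) hdir
      have : a + 2 ∈ B := this ▸ Set.mem_insert _ _
      have := h' _ this
      omega
    obtain ⟨b, hb, hba⟩ := hne2
    -- B = {a, b}
    have hBab : B = {a, b} := by
      apply Set.eq_of_subset_of_subset
      · intro x hx
        simp only [Set.mem_insert_iff, Set.mem_singleton_iff]
        by_contra hx'
        push_neg at hx'
        have h1 := clique x hx a ha
        have h2 := clique x hx b hb
        have h3 := clique a ha b hb
        rcases hx' with ⟨hxa, hxb⟩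
        omega
      · intro x hx
        rcases hx with rfl | hx
        · exact ha
        · rw [Set.mem_singleton_iff] at hx; subst hx; exact hb
    rw [hBab, Cardinal.mk_insert (by simpa using fun e => hba e.symm), Cardinal.mk_singleton]
    norm_num
  · -- lowerIndex (Squares 1) = 3
    apply IsLeast.csInf_eq
    constructor
    · exact ⟨{0,1,2}, subfactor_012, mk_012.symm⟩
    · rintro c ⟨B, hB, rfl⟩
      obtain ⟨a, ha, b, hb, cc, hc, hab, hac, hbc⟩ := subfactor_one_three hB
      exact three_le_of_distinct ha hb hc hab hac hbc
  · -- upperIndex (Squares 1) = 4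
    apply IsGreatest.csSup_eq
    constructor
    · exact ⟨{0,2,4,6}, subfactor_0246, mk_0246.symm⟩
    · rintro c ⟨B, hB, rfl⟩
      exact direct_card_le hB.1
end

section
/- Let F = {F_n : n ≥ 1} be the set of Fibonacci numbers (F_1 = F_2 = 1, F_n = F_{n−1} + F_{n−2}) in the additive group ℤ. Then the difference set F − F is not syndetic in ℤ: for every L there exists k such that the interval (F_k, F_k + L] contains no element of F − F. Consequently F is index stable in ℤ with index ℵ₀, i.e., every subfactor of ℤ relative to F is countably infinite. -/
open Pointwise

/-- A subset `S` of `(ℤ,+)` is syndetic if `S + F = ℤ` for some finite `F`. -/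
def Syndetic (S : Set ℤ) : Prop :=
  ∃ F : Finset ℤ, S + (F : Set ℤ) = Set.univ

/-- The set of Fibonacci numbers `F_n` for `n ≥ 1`, inside `ℤ`. -/
def FibSet : Set ℤ := {x : ℤ | ∃ n : ℕ, 1 ≤ n ∧ x = (Nat.fib n : ℤ)}

lemma fib_lt_iff {m n : ℕ} (h : Nat.fib m < Nat.fib n) : m < n := by
  by_contra hc
  exact absurd (Nat.fib_mono (Nat.le_of_not_lt hc)) (Nat.not_le_of_lt h)

lemma fib_gap {k m n : ℕ} (hk : 4 ≤ k)
    (h : Nat.fib n + Nat.fib k < Nat.fib m) :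
    Nat.fib n + Nat.fib k + Nat.fib (k - 3) ≤ Nat.fib m := by
  obtain ⟨j, rfl⟩ : ∃ j, k = j + 4 := ⟨k - 4, by omega⟩
  have hkm : j + 4 < m := fib_lt_iff (by omega)
  have hsimp : j + 4 - 3 = j + 1 := by omega
  rw [hsimp]
  rcases Nat.lt_or_ge m (j + 6) with hm | hm
  · -- m = j + 5 = k + 1
    have hm5 : m = j + 5 := by omega
    subst hm5
    have h5 : Nat.fib (j + 5) = Nat.fib (j + 4) + Nat.fib (j + 3) := by
      rw [show j + 5 = (j+3) + 2 from rfl, Nat.fib_add_two]; ring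
    have hn : Nat.fib n < Nat.fib (j + 3) := by omega
    have hn2 : n ≤ j + 2 := by have := fib_lt_iff hn; omega
    have hfn : Nat.fib n ≤ Nat.fib (j + 2) := Nat.fib_mono hn2
    have h3 : Nat.fib (j + 3) = Nat.fib (j + 1) + Nat.fib (j + 2) := Nat.fib_add_two
    omega
  · -- m ≥ j + 6 = k + 2
    obtain ⟨i, rfl⟩ : ∃ i, m = i + (j + 6) := ⟨m - (j+6), by omega⟩
    have hfm : Nat.fib (i + (j + 6)) =
        Nat.fib (i + (j + 4)) + Nat.fib (i + (j + 5)) := by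
      rw [show i + (j + 6) = (i + (j+4)) + 2 by ring]
      rw [Nat.fib_add_two]
      ring_nf
    have hstep : Nat.fib (j + 4) + Nat.fib (j + 1) ≤ Nat.fib (j + 5) := by
      have h5 : Nat.fib (j + 5) = Nat.fib (j + 3) + Nat.fib (j + 4) := Nat.fib_add_two
      have := Nat.fib_mono (show j + 1 ≤ j + 3 by omega)
      omega
    rcases Nat.lt_or_ge n (i + (j + 5)) with hn | hn
    · -- n ≤ m - 2
      have hfn : Nat.fib n ≤ Nat.fib (i + (j + 4)) := Nat.fib_mono (by omega)
      have hA : Nat.fib (j + 5) ≤ Nat.fib (i + (j + 5)) := Nat.fib_mono (by omega)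
      omega
    · -- n ≥ m - 1
      have hnm : n < i + (j + 6) := fib_lt_iff (by omega)
      have hn5 : n = i + (j + 5) := by omega
      subst hn5
      -- fib k < fib (m-2)
      have hk2 : Nat.fib (j + 4) < Nat.fib (i + (j + 4)) := by omega
      have hik : j + 5 ≤ i + (j + 4) := by
        have := fib_lt_iff hk2; omega
      have hA : Nat.fib (j + 5) ≤ Nat.fib (i + (j + 4)) := Nat.fib_mono hik
      omega

lemma part1 : ∀ L : ℤ, ∃ k : ℕ, ∀ d ∈ FibSet - FibSet,
    ¬ ((Nat.fib k : ℤ) < d ∧ d ≤ (Nat.fib k : ℤ) + L) := by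
  intro L
  refine ⟨L.toNat + 8, ?_⟩
  rintro d hd ⟨h1, h2⟩
  rw [Set.mem_sub] at hd
  obtain ⟨x, hx, y, hy, hxy⟩ := hd
  obtain ⟨m, hm1, rfl⟩ := hx
  obtain ⟨n, hn1, rfl⟩ := hy
  subst hxy
  set k := L.toNat + 8 with hk
  have hnat : Nat.fib n + Nat.fib k < Nat.fib m := by
    have : (Nat.fib n : ℤ) + (Nat.fib k : ℤ) < (Nat.fib m : ℤ) := by linarith
    exact_mod_cast this
  have hgap := fib_gap (show 4 ≤ k by omega) hnat
  have hbig : L.toNat + 5 ≤ Nat.fib (k - 3) := by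
    have : k - 3 = L.toNat + 5 := by omega
    rw [this]
    exact Nat.le_fib_self (by omega)
  have hL : L ≤ (L.toNat : ℤ) := Int.self_le_toNat L
  have hcast : (Nat.fib n : ℤ) + (Nat.fib k : ℤ) + (Nat.fib (k-3) : ℤ) ≤ (Nat.fib m : ℤ) := by
    exact_mod_cast hgap
  have hcast2 : ((L.toNat : ℤ) + 5 : ℤ) ≤ (Nat.fib (k-3) : ℤ) := by exact_mod_cast hbig
  linarith

lemma part2 : ¬ Syndetic (FibSet - FibSet) := by
  rintro ⟨F', hF'⟩
  set L₀ : ℕ := F'.sup (fun f => f.natAbs) with hL₀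
  obtain ⟨k, hk⟩ := part1 (2 * (L₀ : ℤ) + 1)
  set x : ℤ := (Nat.fib k : ℤ) + (L₀ : ℤ) + 1 with hx
  have hxmem : x ∈ (FibSet - FibSet) + (F' : Set ℤ) := by rw [hF']; trivial
  rw [Set.mem_add] at hxmem
  obtain ⟨s, hs, f, hf, hsf⟩ := hxmem
  have hfb : f.natAbs ≤ L₀ := Finset.le_sup hf
  have := hk s hs
  have hf1 : -(L₀ : ℤ) ≤ f ∧ f ≤ (L₀ : ℤ) := by omega
  apply this
  constructor <;> omega

lemma fibset_one : (1 : ℤ) ∈ FibSet := ⟨1, le_refl 1, by simp⟩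

lemma part3 : ∀ B : Set ℤ, IsSubfactor FibSet B → Cardinal.mk ↥B = Cardinal.aleph0 := by
  rintro B ⟨hdir, hmax⟩
  have hBne : B.Nonempty := by
    rcases Set.eq_empty_or_nonempty B with hB | hB
    · exfalso
      have hd : IsDirectSum FibSet {0} := by
        rintro a₁ ha₁ b₁ hb₁ a₂ ha₂ b₂ hb₂ heq
        simp only [Set.mem_singleton_iff] at hb₁ hb₂
        subst hb₁; subst hb₂
        exact ⟨by omega, rfl⟩
      have := hmax {0} (by rw [hB]; exact Set.empty_subset _) hd
      rw [hB] at this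
      exact absurd this (by simp [Set.eq_empty_iff_forall_notMem])
    · exact hB
  have hBinf : B.Infinite := by
    by_contra hfin
    have hBfin : B.Finite := Set.not_infinite.mp hfin
    -- cover ℤ by (FibSet - FibSet) + B
    have hcover : ∀ z : ℤ, ∃ d ∈ FibSet - FibSet, ∃ b ∈ B, d + b = z := by
      intro z
      by_cases hz : z ∈ B
      · exact ⟨0, ⟨1, fibset_one, 1, fibset_one, by ring⟩, z, hz, by ring⟩
      · have hne : B ∪ {z} ≠ B := by
          intro h
          exact hz (h ▸ Set.mem_union_right B rfl)
        have hnd : ¬ IsDirectSum FibSet (B ∪ {z}) := fun h =>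
          hne (hmax _ Set.subset_union_left h)
        unfold IsDirectSum at hnd
        push_neg at hnd
        obtain ⟨a₁, ha₁, b₁, hb₁, a₂, ha₂, b₂, hb₂, heq, hne2⟩ := hnd
        rcases hb₁ with hb₁ | hb₁ <;> rcases hb₂ with hb₂ | hb₂
        · have h := hdir a₁ ha₁ b₁ hb₁ a₂ ha₂ b₂ hb₂ heq
          exact absurd h.2 (hne2 h.1)
        · -- b₂ = z
          simp only [Set.mem_singleton_iff] at hb₂; subst hb₂
          exact ⟨a₁ - a₂, ⟨a₁, ha₁, a₂, ha₂, rfl⟩, b₁, hb₁, by omega⟩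
        · -- b₁ = z
          simp only [Set.mem_singleton_iff] at hb₁; subst hb₁
          exact ⟨a₂ - a₁, ⟨a₂, ha₂, a₁, ha₁, rfl⟩, b₂, hb₂, by omega⟩
        · simp only [Set.mem_singleton_iff] at hb₁ hb₂; subst hb₁; subst hb₂
          exact absurd rfl (hne2 (by omega))
    apply part2
    refine ⟨hBfin.toFinset, ?_⟩
    ext z
    simp only [Set.mem_univ, iff_true, Set.mem_add]
    obtain ⟨d, hd, b, hb, hdb⟩ := hcover z
    exact ⟨d, hd, b, by simpa using hb, hdb⟩
  haveI := hBinf.to_subtype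
  exact le_antisymm (Cardinal.mk_le_aleph0) (Cardinal.aleph0_le_mk _)

theorem stmt19 :
    (∀ L : ℤ, ∃ k : ℕ, ∀ d ∈ FibSet - FibSet,
      ¬ ((Nat.fib k : ℤ) < d ∧ d ≤ (Nat.fib k : ℤ) + L)) ∧
    ¬ Syndetic (FibSet - FibSet) ∧
    (∀ B : Set ℤ, IsSubfactor FibSet B → Cardinal.mk ↥B = Cardinal.aleph0) := by
  exact ⟨part1, part2, part3⟩
end
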